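/- For the round metric g = I₃ (the 3×3 identity matrix), the quantum Levi-Civita connection coefficients are Γ_{ijk} = ε_{ijk}, the Ricci tensor is R_{mn} = −(1/4)δ_{mn}, and the Ricci scalar is S = −3/4. -/

import Mathlib

open scoped BigOperators

/-- The Levi-Civita symbol on `{1,2,3}` (totally antisymmetric, `ε₁₂₃ = 1`). -/
noncomputable def eps (i j k : Fin 3) : ℝ :=
  (((j : ℕ) : ℝ) - ((i : ℕ) : ℝ)) * (((k : ℕ) : ℝ) - ((j : ℕ) : ℝ)) *
    (((k : ℕ) : ℝ) - ((i : ℕ) : ℝ)) / 2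

/-- The Christoffel symbols `Γ_{ijk} = 2 ε_{ikm} g_{mj} + Tr(g) ε_{ijk}` of the quantum
Levi-Civita connection. -/
noncomputable def Gam (g : Matrix (Fin 3) (Fin 3) ℝ) (i j k : Fin 3) : ℝ :=
  2 * ∑ m, eps i k m * g m j + g.trace * eps i j k

/-- The raised-index Christoffel symbols `Γ^i_{jk} = h_{im} Γ_{mjk}`, `h = g⁻¹`. -/
noncomputable def GamU (g : Matrix (Fin 3) (Fin 3) ℝ) (i j k : Fin 3) : ℝ :=
  ∑ m, g⁻¹ i m * Gam g m j k

/-- The curvature coefficients `ρ^i_{jk} = (1/4)Γ^i_{jk} − (1/8) ε_{jmn} Γ^i_{ml} Γ^l_{nk}`. -/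
noncomputable def rho (g : Matrix (Fin 3) (Fin 3) ℝ) (i j k : Fin 3) : ℝ :=
  (1 / 4) * GamU g i j k -
    (1 / 8) * ∑ m, ∑ n, ∑ l, eps j m n * GamU g i m l * GamU g l n k

/-- The Ricci tensor `R_{mn} = ρ^i_{jn} ε_{jim}`. -/
noncomputable def RicciT (g : Matrix (Fin 3) (Fin 3) ℝ) (m n : Fin 3) : ℝ :=
  ∑ i, ∑ j, rho g i j n * eps j i m

/-- The Ricci scalar `S = R_{mn} h_{mn}`, `h = g⁻¹`. -/
noncomputable def Sscal (g : Matrix (Fin 3) (Fin 3) ℝ) : ℝ :=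
  ∑ m, ∑ n, RicciT g m n * g⁻¹ m n


lemma gam_one (i j k : Fin 3) : Gam 1 i j k = eps i j k := by
  fin_cases i <;> fin_cases j <;> fin_cases k <;>
    norm_num [Gam, eps, Fin.sum_univ_three, Matrix.trace, Matrix.one_apply, Matrix.diag]

lemma gamU_one (i j k : Fin 3) : GamU 1 i j k = eps i j k := by
  simp [GamU, Matrix.one_apply, gam_one, ite_mul]

set_option maxHeartbeats 2000000 in
lemma ricci_one (m n : Fin 3) :
    RicciT 1 m n = -(1 / 4) * (if m = n then (1 : ℝ) else 0) := by
  simp only [RicciT, rho, gamU_one]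
  fin_cases m <;> fin_cases n <;> simp only [Fin.sum_univ_three] <;> norm_num [eps]

/-- For the round metric `g = I₃`: the quantum Levi-Civita connection coefficients are
`Γ_{ijk} = ε_{ijk}`, the Ricci tensor is `R_{mn} = −(1/4)δ_{mn}`, and the Ricci scalar is
`S = −3/4`. -/
theorem round_metric_geometry :
    (∀ i j k, Gam (1 : Matrix (Fin 3) (Fin 3) ℝ) i j k = eps i j k) ∧
      (∀ m n, RicciT (1 : Matrix (Fin 3) (Fin 3) ℝ) m n =
        -(1 / 4) * (if m = n then (1 : ℝ) else 0)) ∧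
      Sscal (1 : Matrix (Fin 3) (Fin 3) ℝ) = -(3 / 4) := by
  refine ⟨gam_one, ricci_one, ?_⟩
  simp only [Sscal, ricci_one, inv_one]
  norm_num [Fin.sum_univ_three, Matrix.one_apply]
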